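/- The pumping lemma for context-free languages: if L is a context-free language, there exists a constant p such that every string s ∈ L with |s| ≥ p can be written s = uvwxy with |vx| ≥ 1, |vwx| ≤ p, and u v^n w x^n y ∈ L for all n ≥ 0. -/

import Mathlib

namespace CFPump

open ContextFreeGrammar

variable {T : Type}

/-- Map a word of terminals to a sentential form. -/
abbrev mapT {N : Type*} (w : List T) : List (Symbol T N) := w.map Symbol.terminal

mutual
  /-- Derivation tree with root symbol `s` and terminal yield `w`. -/
  inductive DTree (g : ContextFreeGrammar.{0} T) : Symbol T g.NT → List T → Type where
    | term (t : T) : DTree g (.terminal t) [t]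
    | node (r : ContextFreeRule T g.NT) (hr : r ∈ g.rules) {w : List T}
        (f : DForest g r.output w) : DTree g (.nonterminal r.input) w
  /-- A list of derivation trees for a list of symbols. -/
  inductive DForest (g : ContextFreeGrammar.{0} T) : List (Symbol T g.NT) → List T → Type where
    | nil : DForest g [] []
    | cons {s : Symbol T g.NT} {w : List T} {ss : List (Symbol T g.NT)} {ws : List T}
        (t : DTree g s w) (f : DForest g ss ws) : DForest g (s :: ss) (w ++ ws)
end

variable {g : ContextFreeGrammar.{0} T}

mutual
  def sizeT : ∀ {s w}, DTree g s w → ℕ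
    | _, _, .term _ => 0
    | _, _, .node _ _ f => 1 + sizeF f
  def sizeF : ∀ {ss ws}, DForest g ss ws → ℕ
    | _, _, .nil => 0
    | _, _, .cons t f => sizeT t + sizeF f
end

mutual
  def heightT : ∀ {s w}, DTree g s w → ℕ
    | _, _, .term _ => 0
    | _, _, .node _ _ f => 1 + heightF f
  def heightF : ∀ {ss ws}, DForest g ss ws → ℕ
    | _, _, .nil => 0
    | _, _, .cons t f => max (heightT t) (heightF f)
end

/-- Recast a tree along an equality of yields. -/
def recastT {s : Symbol T g.NT} {w w' : List T} (h : w = w') (t : DTree g s w) :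
    DTree g s w' := h ▸ t

def recastF {ss : List (Symbol T g.NT)} {ws ws' : List T} (h : ws = ws')
    (f : DForest g ss ws) : DForest g ss ws' := h ▸ f

@[simp] lemma sizeT_recastT {s : Symbol T g.NT} {w w' : List T} (h : w = w') (t : DTree g s w) :
    sizeT (recastT h t) = sizeT t := by subst h; rfl

@[simp] lemma sizeF_recastF {ss : List (Symbol T g.NT)} {ws ws' : List T} (h : ws = ws')
    (f : DForest g ss ws) : sizeF (recastF h f) = sizeF f := by subst h; rfl

@[simp] lemma heightT_recastT {s : Symbol T g.NT} {w w' : List T} (h : w = w')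
    (t : DTree g s w) : heightT (recastT h t) = heightT t := by subst h; rfl

/-- Append two forests. -/
def appendF : ∀ {a wa b wb}, DForest g a wa → DForest g b wb → DForest g (a ++ b) (wa ++ wb)
  | _, _, _, _, .nil, f2 => f2
  | _, _, _, _, .cons t f, f2 =>
      recastF (List.append_assoc _ _ _).symm (.cons t (appendF f f2))

@[simp] lemma sizeF_appendF : ∀ {a wa b wb} (f1 : DForest g a wa) (f2 : DForest g b wb),
    sizeF (appendF f1 f2) = sizeF f1 + sizeF f2
  | _, _, _, _, .nil, f2 => by simp [appendF, sizeF]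
  | _, _, _, _, .cons t f, f2 => by
      simp [appendF, sizeF, sizeF_appendF f f2]; omega

/-- Generic middle congruence for derivations. -/
lemma derives_middle {α β pre post : List (Symbol T g.NT)} (h : g.Derives α β) :
    g.Derives (pre ++ α ++ post) (pre ++ β ++ post) :=
  (h.append_left pre).append_right post

mutual
  theorem derives_of_tree : ∀ {s w} (t : DTree g s w), g.Derives [s] (mapT w)
    | _, _, .term t => Derives.refl _
    | _, _, .node r hr f =>
        (Produces.single ⟨r, hr, ContextFreeRule.Rewrites.input_output⟩).trans
          (derives_of_forest f)
  theorem derives_of_forest : ∀ {ss ws} (f : DForest g ss ws), g.Derives ss (mapT ws)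
    | _, _, .nil => Derives.refl _
    | _, _, @DForest.cons _ _ s w ss ws t f => by
        have h1 := (derives_of_tree t).append_right ss
        have h2 := (derives_of_forest f).append_left (mapT (N := g.NT) w)
        simpa using h1.trans h2
end

/-- The forest of terminal leaves yielding `w`. -/
def ofTerminals : ∀ w : List T, DForest g (mapT w) w
  | [] => .nil
  | (a :: w) => .cons (.term a) (ofTerminals w)

lemma exists_split : ∀ (a : List (Symbol T g.NT)) {b w}, DForest g (a ++ b) w →
    ∃ wa wb, w = wa ++ wb ∧ Nonempty (DForest g a wa) ∧ Nonempty (DForest g b wb) := by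
  intro a
  induction a with
  | nil => exact fun f => ⟨[], _, rfl, ⟨.nil⟩, ⟨f⟩⟩
  | cons s a iha =>
      intro b w f
      rw [List.cons_append] at f
      cases f with
      | cons t f' =>
          obtain ⟨wa, wb, rfl, ⟨fa⟩, ⟨fb⟩⟩ := iha f'
          exact ⟨_ ++ wa, wb, (List.append_assoc _ _ _).symm, ⟨.cons t fa⟩, ⟨fb⟩⟩

lemma exists_forest {α : List (Symbol T g.NT)} {w : List T} (h : g.Derives α (mapT w)) :
    Nonempty (DForest g α w) := by
  induction h using Relation.ReflTransGen.head_induction_on with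
  | refl => exact ⟨ofTerminals w⟩
  | head hstep _ ih =>
      obtain ⟨r, hr, hrw⟩ := hstep
      obtain ⟨p, q, rfl, rfl⟩ := hrw.exists_parts
      obtain ⟨wpq, wq, rfl, ⟨fpq⟩, ⟨fq⟩⟩ := exists_split (p ++ r.output) ih.some
      obtain ⟨wp, wo, rfl, ⟨fp⟩, ⟨fo⟩⟩ := exists_split p fpq
      exact ⟨appendF (appendF fp (recastF (List.append_nil wo) (.cons (.node r hr fo) .nil))) fq⟩

lemma exists_tree {σ : Symbol T g.NT} {w : List T} (h : g.Derives [σ] (mapT w)) :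
    Nonempty (DTree g σ w) := by
  obtain ⟨f⟩ := exists_forest h
  cases f with
  | cons t f =>
      cases f with
      | nil => exact ⟨recastT (by simp) t⟩
/-- List of nonterminals appearing as left-hand sides of rules. -/
noncomputable def ntList (g : ContextFreeGrammar.{0} T) : List g.NT := g.rules.toList.map (·.input)

/-- Branching bound: 2 plus total of all rule output lengths. -/
noncomputable def Mb (g : ContextFreeGrammar.{0} T) : ℕ := 2 + (g.rules.toList.map (·.output.length)).sum

lemma two_le_Mb : 2 ≤ Mb g := Nat.le_add_right 2 _

lemma output_length_le {r : ContextFreeRule T g.NT} (hr : r ∈ g.rules) :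
    r.output.length ≤ Mb g := by
  have : r.output.length ∈ g.rules.toList.map (·.output.length) :=
    List.mem_map_of_mem (Finset.mem_toList.mpr hr)
  have h2 := List.single_le_sum (fun (x : ℕ) _ => Nat.zero_le x) _ this
  unfold Mb
  omega

mutual
  theorem len_le_T : ∀ {s w} (t : DTree g s w), w.length ≤ Mb g ^ heightT t
    | _, _, .term t => by simp [heightT]
    | _, _, .node r hr f => by
        have h1 := len_le_F f
        have h2 := output_length_le hr
        have h3 : Mb g ^ heightF f ≥ 1 := Nat.one_le_pow _ _ (by have := two_le_Mb (g := g); omega)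
        calc _ ≤ r.output.length * Mb g ^ heightF f := h1
        _ ≤ Mb g * Mb g ^ heightF f := Nat.mul_le_mul_right _ h2
        _ = Mb g ^ heightT (DTree.node r hr f) := by rw [heightT]; ring
  theorem len_le_F : ∀ {ss ws} (f : DForest g ss ws), ws.length ≤ ss.length * Mb g ^ heightF f
    | _, _, .nil => by simp
    | _, _, @DForest.cons _ _ s w ss ws t f => by
        have h1 := len_le_T t
        have h2 := len_le_F f
        have hM : 1 ≤ Mb g := le_trans (by norm_num) (two_le_Mb (g := g))
        have e1 : Mb g ^ heightT t ≤ Mb g ^ heightF (DForest.cons t f) :=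
          Nat.pow_le_pow_right hM (by rw [heightF]; omega)
        have e2 : Mb g ^ heightF f ≤ Mb g ^ heightF (DForest.cons t f) :=
          Nat.pow_le_pow_right hM (by rw [heightF]; omega)
        have e3 : ws.length ≤ ss.length * Mb g ^ heightF (DForest.cons t f) :=
          le_trans h2 (Nat.mul_le_mul_left _ e2)
        simp only [List.length_append, List.length_cons]
        calc w.length + ws.length ≤ Mb g ^ heightF (DForest.cons t f)
            + ss.length * Mb g ^ heightF (DForest.cons t f) := by
              have := le_trans h1 e1; omega
        _ = (ss.length + 1) * Mb g ^ heightF (DForest.cons t f) := by ring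
        _ = _ := by omega
end
lemma root_mem : ∀ {σ : Symbol T g.NT} {w} (c : DTree g σ w), 1 ≤ heightT c →
    ∃ B : g.NT, σ = Symbol.nonterminal B ∧ B ∈ ntList g
  | _, _, .term t => by simp [heightT]
  | _, _, .node r hr f => fun _ =>
      ⟨r.input, rfl, List.mem_map_of_mem (Finset.mem_toList.mpr hr)⟩

/-- Extract a deepest child of a forest, together with context data. -/
lemma exists_deep_child : ∀ {ss : List (Symbol T g.NT)} {ws} (f : DForest g ss ws),
    1 ≤ heightF f →
    ∃ (σ : Symbol T g.NT) (w1 wc w2 : List T) (c : DTree g σ wc),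
      ws = w1 ++ wc ++ w2 ∧ heightT c = heightF f ∧
      g.Derives ss (mapT w1 ++ [σ] ++ mapT w2) ∧
      sizeT c ≤ sizeF f ∧
      ∀ (wc' : List T) (c' : DTree g σ wc'), ∃ f' : DForest g ss (w1 ++ wc' ++ w2),
        sizeF f' + sizeT c = sizeF f + sizeT c'
  | _, _, .nil => by simp [heightF]
  | _, _, @DForest.cons _ _ s w ss ws t f => by
      intro hh
      rcases le_or_gt (heightF f) (heightT t) with hmax | hmax
      · -- pick the head child
        refine ⟨s, [], w, ws, t, by simp, ?_, ?_, by simp [sizeF], ?_⟩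
        · simp [heightF]; omega
        · simpa using (derives_of_forest f).append_left [s]
        · intro wc' c'
          exact ⟨.cons c' f, by simp [sizeF]; omega⟩
      · -- recurse into the tail
        have hh' : 1 ≤ heightF f := by
          have : heightT t < heightF f := hmax; omega
        obtain ⟨σ, w1, wc, w2, c, rfl, hht, hder, hsz, hrepl⟩ := exists_deep_child f hh'
        refine ⟨σ, w ++ w1, wc, w2, c, by simp, ?_, ?_, by simp [sizeF]; omega, ?_⟩
        · simp [heightF]; omega
        · have h1 := (derives_of_tree t).append_right ss
          have h2 := hder.append_left (mapT (N := g.NT) w)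
          have h3 : g.Derives ([s] ++ ss) (mapT w ++ (mapT w1 ++ [σ] ++ mapT w2)) :=
            h1.trans h2
          simpa using h3
        · intro wc' c'
          obtain ⟨f', hf'⟩ := hrepl wc' c'
          refine ⟨recastF (by simp) (.cons t f'), ?_⟩
          simp [sizeF]
          omega
lemma heightT_pos : ∀ {B : g.NT} {s : List T} (t : DTree g (.nonterminal B) s), 1 ≤ heightT t
  | _, _, .node r hr f => by simp [heightT]

lemma sizeT_pos : ∀ {B : g.NT} {s : List T} (t : DTree g (.nonterminal B) s), 1 ≤ sizeT t
  | _, _, .node r hr f => by simp [sizeT]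

/-- Descend along a deepest path to a subtree of prescribed height `h`,
recording the context and a replacement facility. -/
lemma descend : ∀ (n : ℕ) {B : g.NT} {s : List T} (t : DTree g (.nonterminal B) s),
    sizeT t ≤ n → ∀ h : ℕ, 1 ≤ h → h ≤ heightT t →
    ∃ (A : g.NT) (u w₀ y : List T) (t₀ : DTree g (.nonterminal A) w₀),
      s = u ++ w₀ ++ y ∧ heightT t₀ = h ∧
      g.Derives [.nonterminal B] (mapT u ++ [.nonterminal A] ++ mapT y) ∧
      sizeT t₀ ≤ sizeT t ∧
      ∀ (w₁ : List T) (t₁ : DTree g (.nonterminal A) w₁),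
        ∃ t' : DTree g (.nonterminal B) (u ++ w₁ ++ y),
          sizeT t' + sizeT t₀ = sizeT t + sizeT t₁ := by
  intro n
  induction n with
  | zero => intro B s t hn; have := sizeT_pos t; omega
  | succ n ih =>
      intro B s t hn h h1 hht
      rcases eq_or_lt_of_le hht with heq | hlt
      · -- take the tree itself
        refine ⟨B, [], s, [], t, by simp, heq.symm, by simpa using Derives.refl _, le_refl _, ?_⟩
        intro w₁ t₁
        exact ⟨recastT (by simp) t₁, by simp; omega⟩
      · -- descend into a deepest child
        cases t with
        | node r hr f =>
            have hf : 1 ≤ heightF f := by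
              have : heightT (DTree.node r hr f) = 1 + heightF f := rfl
              omega
            obtain ⟨σ, w1, wc, w2, c, rfl, hht, hder, hsz, hrepl⟩ := exists_deep_child f hf
            obtain ⟨C, rfl, _⟩ := root_mem c (by omega)
            have hszc : sizeT c ≤ n := by
              have : sizeT (DTree.node r hr f) = 1 + sizeF f := rfl
              omega
            have hhc : h ≤ heightT c := by
              have : heightT (DTree.node r hr f) = 1 + heightF f := rfl
              omega
            obtain ⟨A, u', w₀, y', t₀, rfl, hh₀, hder', hsz', hrepl'⟩ :=
              ih c hszc h h1 hhc
            refine ⟨A, w1 ++ u', w₀, y' ++ w2, t₀, by simp, hh₀, ?_, ?_, ?_⟩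
            · have step : g.Derives [Symbol.nonterminal r.input] (mapT w1 ++
                  [Symbol.nonterminal C] ++ mapT w2) :=
                (Produces.single ⟨r, hr, ContextFreeRule.Rewrites.input_output⟩).trans hder
              have plug : g.Derives (mapT w1 ++ [Symbol.nonterminal C] ++ mapT w2)
                  (mapT w1 ++ (mapT u' ++ [Symbol.nonterminal A] ++ mapT y') ++ mapT w2) :=
                derives_middle hder'
              have := step.trans plug
              simpa [List.append_assoc] using this
            · have : sizeT (DTree.node r hr f) = 1 + sizeF f := rfl
              omega
            · intro w₁ t₁
              obtain ⟨c', hc'⟩ := hrepl' w₁ t₁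
              obtain ⟨f', hf'⟩ := hrepl _ c'
              refine ⟨recastT (by simp) (.node r hr f'), ?_⟩
              have e1 : sizeT (DTree.node r hr f') = 1 + sizeF f' := rfl
              have e2 : sizeT (DTree.node r hr f) = 1 + sizeF f := rfl
              simp only [sizeT_recastT]
              omega
/-- `A` occurs as the root of a subtree of `t`, with context. -/
def SubNT {B : g.NT} {s : List T} (t : DTree g (.nonterminal B) s) (A : g.NT) : Prop :=
  ∃ (u w₀ y : List T) (t₀ : DTree g (.nonterminal A) w₀), s = u ++ w₀ ++ y ∧
    g.Derives [.nonterminal B] (mapT u ++ [.nonterminal A] ++ mapT y) ∧ sizeT t₀ ≤ sizeT t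

/-- The pumping decomposition can be extracted from `t`. -/
def Pumpable {B : g.NT} {s : List T} (t : DTree g (.nonterminal B) s) : Prop :=
  ∃ (A : g.NT) (u v w x y : List T), s = u ++ v ++ w ++ x ++ y ∧
    g.Derives [.nonterminal B] (mapT u ++ [.nonterminal A] ++ mapT y) ∧
    g.Derives [.nonterminal A] (mapT v ++ [.nonterminal A] ++ mapT x) ∧
    g.Derives [.nonterminal A] (mapT w) ∧
    ∃ t' : DTree g (.nonterminal B) (u ++ w ++ y), sizeT t' < sizeT t

lemma subNT_self {B : g.NT} {s : List T} (t : DTree g (.nonterminal B) s) : SubNT t B :=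
  ⟨[], s, [], t, by simp, by simpa using Derives.refl _, le_refl _⟩

lemma spine : ∀ (n : ℕ) {B : g.NT} {s : List T} (t : DTree g (.nonterminal B) s),
    sizeT t ≤ n →
    ∃ l : List g.NT, l.length = heightT t ∧ (∀ A ∈ l, A ∈ ntList g ∧ SubNT t A) ∧
      (¬ l.Nodup → Pumpable t) := by
  intro n
  induction n with
  | zero => intro B s t hn; have := sizeT_pos t; omega
  | succ n ih =>
      intro B s t hn
      cases t with
      | node r hr f =>
          have hBnt : r.input ∈ ntList g := List.mem_map_of_mem (Finset.mem_toList.mpr hr)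
          have esz : sizeT (DTree.node r hr f) = 1 + sizeF f := rfl
          have eht : heightT (DTree.node r hr f) = 1 + heightF f := rfl
          rcases Nat.eq_zero_or_pos (heightF f) with hf0 | hf
          · refine ⟨[r.input], by simp [eht, hf0], ?_, ?_⟩
            · intro A hA
              rw [List.mem_singleton] at hA
              subst hA
              exact ⟨hBnt, subNT_self _⟩
            · intro hnd
              exact absurd (List.nodup_singleton _) hnd
          · obtain ⟨σ, w1, wc, w2, c, rfl, hht, hder, hsz, hrepl⟩ := exists_deep_child f hf
            obtain ⟨C, rfl, _⟩ := root_mem c (by omega)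
            have hszc : sizeT c ≤ n := by omega
            obtain ⟨l, hl, hmem, hnd⟩ := ih c hszc
            have step : g.Derives [Symbol.nonterminal r.input]
                (mapT w1 ++ [Symbol.nonterminal C] ++ mapT w2) :=
              (Produces.single ⟨r, hr, ContextFreeRule.Rewrites.input_output⟩).trans hder
            refine ⟨r.input :: l, by simp; omega, ?_, ?_⟩
            · intro A hA
              rcases List.mem_cons.mp hA with rfl | hA
              · exact ⟨hBnt, subNT_self _⟩
              · obtain ⟨hAnt, u', w₀, y', t₀, rfl, hder', hsz'⟩ := hmem A hA
                refine ⟨hAnt, w1 ++ u', w₀, y' ++ w2, t₀, by simp, ?_, by omega⟩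
                have := step.trans (derives_middle hder')
                simpa [List.append_assoc] using this
            · intro hnodup
              rw [List.nodup_cons] at hnodup
              push_neg at hnodup
              by_cases hBin : r.input ∈ l
              · -- repetition found: root nonterminal occurs again inside `c`
                obtain ⟨-, u', w₀, y', t₀, rfl, hder', hsz'⟩ := hmem _ hBin
                refine ⟨r.input, [], w1 ++ u', w₀, y' ++ w2, [], by simp, ?_, ?_, ?_, ?_⟩
                · simpa using Derives.refl _
                · have := step.trans (derives_middle hder')
                  simpa [List.append_assoc] using this
                · exact derives_of_tree t₀
                · exact ⟨recastT (by simp) t₀, by simp; omega⟩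
              · -- repetition inside `c`: lift it
                obtain ⟨A, u', v, w, x, y', rfl, d1, d2, d3, t', ht'⟩ := hnd (hnodup hBin)
                refine ⟨A, w1 ++ u', v, w, x, y' ++ w2, by simp, ?_, d2, d3, ?_⟩
                · have := step.trans (derives_middle d1)
                  simpa [List.append_assoc] using this
                · obtain ⟨f', hf'⟩ := hrepl _ t'
                  refine ⟨recastT (by simp) (.node r hr f'), ?_⟩
                  have e1 : sizeT (DTree.node r hr f') = 1 + sizeF f' := rfl
                  simp only [sizeT_recastT]
                  omega
lemma derives_subst {α p q : List (Symbol T g.NT)} {B : g.NT}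
    (h1 : g.Derives α (p ++ [.nonterminal B] ++ q)) {β : List (Symbol T g.NT)}
    (h2 : g.Derives [.nonterminal B] β) : g.Derives α (p ++ β ++ q) :=
  h1.trans (derives_middle h2)

end CFPump

/-- `n`-fold repetition (concatenation power) of a list. -/
def listPow {α : Type*} (l : List α) (n : ℕ) : List α :=
  (List.replicate n l).flatten

namespace CFPump

open ContextFreeGrammar

variable {T : Type} {g : ContextFreeGrammar.{0} T}

lemma listPow_succ {α : Type*} (l : List α) (n : ℕ) :
    listPow l (n + 1) = l ++ listPow l n := by
  simp [listPow, List.replicate_succ]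

lemma listPow_succ_right {α : Type*} (l : List α) (n : ℕ) :
    listPow l (n + 1) = listPow l n ++ l := by
  induction n with
  | zero => simp [listPow]
  | succ n ih =>
      calc listPow l (n + 2) = l ++ listPow l (n + 1) := listPow_succ l (n + 1)
      _ = l ++ (listPow l n ++ l) := by rw [ih]
      _ = (l ++ listPow l n) ++ l := by rw [List.append_assoc]
      _ = listPow l (n + 1) ++ l := by rw [listPow_succ]

lemma pump_derives {A : g.NT} {v x : List T}
    (h : g.Derives [.nonterminal A] (mapT v ++ [.nonterminal A] ++ mapT x)) :
    ∀ n : ℕ, g.Derives [.nonterminal A]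
      (mapT (listPow v n) ++ [.nonterminal A] ++ mapT (listPow x n))
  | 0 => by simpa [listPow] using Derives.refl ([.nonterminal A] : List (Symbol T g.NT))
  | n + 1 => by
      have ih := pump_derives h n
      have h2 := derives_middle (pre := mapT v) (post := mapT (N := g.NT) x) ih
      have h3 := h.trans h2
      rw [listPow_succ v n, listPow_succ_right x n]
      simpa [List.append_assoc] using h3

end CFPump

open CFPump

/-- **Pumping lemma for context-free languages**: if `L` is context-free, there is a
constant `p` such that every string `s ∈ L` with `|s| ≥ p` can be written as
`s = u ++ v ++ w ++ x ++ y` with `|v ++ x| ≥ 1`, `|v ++ w ++ x| ≤ p`, and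
`u ++ v^n ++ w ++ x^n ++ y ∈ L` for all `n ≥ 0`. -/
theorem pumping_lemma_context_free {T : Type} (L : Language T) (hL : L.IsContextFree) :
    ∃ p : ℕ, ∀ s ∈ L, p ≤ s.length →
      ∃ u v w x y : List T,
        s = u ++ v ++ w ++ x ++ y ∧
        1 ≤ (v ++ x).length ∧
        (v ++ w ++ x).length ≤ p ∧
        ∀ n : ℕ, u ++ listPow v n ++ w ++ listPow x n ++ y ∈ L := by
  classical
  obtain ⟨g, rfl⟩ := hL
  set K := (ntList g).length with hK
  refine ⟨Mb g ^ (K + 1), ?_⟩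
  intro s hs hlen
  rw [ContextFreeGrammar.mem_language_iff] at hs
  -- choose a minimal-size derivation tree for s
  have hex : ∃ k, ∃ t : DTree g (.nonterminal g.initial) s, sizeT t = k := by
    obtain ⟨t⟩ := exists_tree hs
    exact ⟨sizeT t, t, rfl⟩
  obtain ⟨t, ht⟩ := Nat.find_spec hex
  have hmin : ∀ t₂ : DTree g (.nonterminal g.initial) s, Nat.find hex ≤ sizeT t₂ :=
    fun t₂ => Nat.find_min' hex ⟨t₂, rfl⟩
  -- the tree is high
  have hMb : 2 ≤ Mb g := two_le_Mb
  have hhigh : K + 1 ≤ heightT t := by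
    have h1 : Mb g ^ (K + 1) ≤ Mb g ^ heightT t := le_trans hlen (len_le_T t)
    exact (Nat.pow_le_pow_iff_right (by omega)).mp h1
  -- descend to a subtree of height exactly K+1
  obtain ⟨A, u₁, w₀, y₁, t₀, rfl, hh₀, hctx, hsz₀, hrepl⟩ :=
    descend (sizeT t) t le_rfl (K + 1) (by omega) hhigh
  -- pigeonhole along a deepest path in t₀
  obtain ⟨l, hl, hmem, hpump⟩ := spine (sizeT t₀) t₀ le_rfl
  have hnodup : ¬ l.Nodup := by
    intro hnd
    have hsub : l ⊆ ntList g := fun A hA => (hmem A hA).1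
    have := (hnd.subperm hsub).length_le
    omega
  obtain ⟨A₂, u₂, v, w, x, y₂, hdec, d1, d2, d3, t'', ht''⟩ := hpump hnodup
  subst hdec
  refine ⟨u₁ ++ u₂, v, w, x, y₂ ++ y₁, by simp, ?_, ?_, ?_⟩
  · -- |vx| ≥ 1, by minimality of t
    by_contra hvx
    push_neg at hvx
    have hlen0 : v.length = 0 ∧ x.length = 0 := by
      simp only [List.length_append] at hvx; omega
    have hv : v = [] := List.length_eq_zero_iff.mp hlen0.1
    have hx : x = [] := List.length_eq_zero_iff.mp hlen0.2
    subst hv; subst hx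
    obtain ⟨t', ht'⟩ := hrepl _ t''
    have heq : u₁ ++ (u₂ ++ w ++ y₂) ++ y₁ = u₁ ++ (u₂ ++ [] ++ w ++ [] ++ y₂) ++ y₁ := by simp
    have := hmin (recastT heq t')
    simp only [sizeT_recastT] at this
    omega
  · -- |vwx| ≤ p
    have hlen₀ := len_le_T t₀
    rw [hh₀] at hlen₀
    simp only [List.length_append] at hlen₀ ⊢
    omega
  · -- pumping
    intro n
    rw [ContextFreeGrammar.mem_language_iff]
    have s2 : g.Derives [Symbol.nonterminal g.initial]
        ((mapT u₁ ++ mapT u₂) ++ [Symbol.nonterminal A₂] ++ (mapT y₂ ++ mapT y₁)) := by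
      have := derives_subst hctx d1
      simpa [List.append_assoc] using this
    have s3 : g.Derives [Symbol.nonterminal g.initial]
        ((mapT u₁ ++ mapT u₂ ++ mapT (listPow v n)) ++ [Symbol.nonterminal A₂] ++
          (mapT (listPow x n) ++ mapT y₂ ++ mapT y₁)) := by
      have := derives_subst s2 (pump_derives d2 n)
      simpa [List.append_assoc] using this
    have s4 := derives_subst s3 d3
    simpa [List.append_assoc] using s4
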